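/- Let λ : ℕ → ℝ satisfy 0 ≤ λ_j for all j and S := Σ_{j=0}^∞ λ_j ≤ 1. Then | (1 − ∏'_{j} (1 − λ_j) − Σ_{l=0}^∞ λ_l ∏'_{j≠l} (1 − λ_j)) − ½ (S² − Σ_{j=0}^∞ λ_j²) | ≤ S³. -/
import Mathlib
open Finset Filter Topology
set_option maxHeartbeats 1000000
set_option linter.unusedSectionVars false

section aux
variable {ι : Type*} [DecidableEq ι]

lemma my_prod_nonneg {g : ι → ℝ} (h0 : ∀ i, 0 ≤ g i) (s : Finset ι) :
    0 ≤ ∏ i ∈ s, g i := Finset.prod_nonneg fun i _ => h0 i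

lemma my_prod_le_one {g : ι → ℝ} (h0 : ∀ i, 0 ≤ g i) (h1 : ∀ i, g i ≤ 1) (s : Finset ι) :
    ∏ i ∈ s, g i ≤ 1 := Finset.prod_le_one (fun i _ => h0 i) (fun i _ => h1 i)

lemma my_antitone {g : ι → ℝ} (h0 : ∀ i, 0 ≤ g i) (h1 : ∀ i, g i ≤ 1) :
    Antitone (fun s : Finset ι => ∏ i ∈ s, g i) := by
  intro s t hst
  have h := Finset.prod_sdiff (f := g) hst
  calc ∏ i ∈ t, g i = (∏ i ∈ t \ s, g i) * ∏ i ∈ s, g i := h.symm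
  _ ≤ 1 * ∏ i ∈ s, g i :=
      mul_le_mul_of_nonneg_right (my_prod_le_one h0 h1 _) (my_prod_nonneg h0 _)
  _ = ∏ i ∈ s, g i := one_mul _

lemma my_hasProd {g : ι → ℝ} (h0 : ∀ i, 0 ≤ g i) (h1 : ∀ i, g i ≤ 1) :
    HasProd g (⨅ s : Finset ι, ∏ i ∈ s, g i) :=
  tendsto_atTop_ciInf (my_antitone h0 h1)
    ⟨0, by rintro x ⟨s, rfl⟩; exact my_prod_nonneg h0 s⟩

lemma my_weierstrass {g : ι → ℝ} (h0 : ∀ i, 0 ≤ g i) (h1 : ∀ i, g i ≤ 1) (s : Finset ι) :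
    1 - ∑ i ∈ s, g i ≤ ∏ i ∈ s, (1 - g i) := by
  induction s using Finset.cons_induction with
  | empty => simp
  | cons a s ha ih =>
    rw [prod_cons, sum_cons]
    have hs0 : 0 ≤ ∑ i ∈ s, g i := Finset.sum_nonneg fun i _ => h0 i
    nlinarith [h0 a, h1 a, ih]

end aux

lemma fin_key (l : ℕ → ℝ) (hpos : ∀ j, 0 ≤ l j) (h1 : ∀ j, l j ≤ 1) (s : Finset ℕ) :
    (1 - ∑ j ∈ s, l j ≤ ∏ j ∈ s, (1 - l j)) ∧
    (∏ j ∈ s, (1 - l j) ≤ 1 - ∑ j ∈ s, l j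
        + (1/2) * ((∑ j ∈ s, l j)^2 - ∑ j ∈ s, (l j)^2)) ∧
    (∑ j ∈ s, (l j)^2 ≤ (∑ j ∈ s, l j)^2) ∧
    (-(∑ j ∈ s, l j)^3 ≤
      (1 - ∏ j ∈ s, (1 - l j) - ∑ i ∈ s, l i * ∏ j ∈ s.erase i, (1 - l j))
        - (1/2) * ((∑ j ∈ s, l j)^2 - ∑ j ∈ s, (l j)^2)) ∧
    ((1 - ∏ j ∈ s, (1 - l j) - ∑ i ∈ s, l i * ∏ j ∈ s.erase i, (1 - l j))
        - (1/2) * ((∑ j ∈ s, l j)^2 - ∑ j ∈ s, (l j)^2) ≤ 0) := by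
  induction s using Finset.cons_induction with
  | empty => norm_num
  | cons a s ha ih =>
    obtain ⟨ih1, ih2, ih3, ih4, ih5⟩ := ih
    have ha0 := hpos a
    have ha1 := h1 a
    have hSn0 : (0:ℝ) ≤ ∑ j ∈ s, l j := Finset.sum_nonneg fun j _ => hpos j
    have hTn0 : (0:ℝ) ≤ ∑ j ∈ s, (l j)^2 := Finset.sum_nonneg fun j _ => sq_nonneg _
    -- recurrences
    have hP : ∏ j ∈ cons a s ha, (1 - l j) = (1 - l a) * ∏ j ∈ s, (1 - l j) :=
      Finset.prod_cons ha
    have hSn : ∑ j ∈ cons a s ha, l j = l a + ∑ j ∈ s, l j := Finset.sum_cons ha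
    have hTn : ∑ j ∈ cons a s ha, (l j)^2 = (l a)^2 + ∑ j ∈ s, (l j)^2 :=
      Finset.sum_cons ha
    have hL : ∑ i ∈ cons a s ha, l i * ∏ j ∈ (cons a s ha).erase i, (1 - l j)
        = l a * ∏ j ∈ s, (1 - l j)
          + (1 - l a) * ∑ i ∈ s, l i * ∏ j ∈ s.erase i, (1 - l j) := by
      rw [Finset.sum_cons, Finset.erase_cons]
      congr 1
      rw [Finset.mul_sum]
      refine Finset.sum_congr rfl fun i hi => ?_
      have hia : i ≠ a := fun h => ha (h ▸ hi)
      have : (cons a s ha).erase i = cons a (s.erase i) (fun h => ha (Finset.mem_of_mem_erase h)) := by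
        rw [Finset.cons_eq_insert, Finset.cons_eq_insert, Finset.erase_insert_of_ne hia.symm]
      rw [this, Finset.prod_cons]
      ring
    rw [hP, hSn, hTn, hL]
    set P := ∏ j ∈ s, (1 - l j) with hPdef
    set Sn := ∑ j ∈ s, l j with hSndef
    set Tn := ∑ j ∈ s, (l j)^2 with hTndef
    set L := ∑ i ∈ s, l i * ∏ j ∈ s.erase i, (1 - l j) with hLdef
    have hE0 : (0:ℝ) ≤ (1/2) * (Sn^2 - Tn) := by linarith
    have hE2 : (1/2) * (Sn^2 - Tn) ≤ Sn^2/2 := by linarith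
    have h1a : (0:ℝ) ≤ 1 - l a := by linarith
    have g1 : 1 - (l a + Sn) ≤ (1 - l a) * P := by
      nlinarith [mul_le_mul_of_nonneg_left ih1 h1a, mul_nonneg ha0 hSn0]
    have g2 : (1 - l a) * P ≤ 1 - (l a + Sn)
        + 1/2 * ((l a + Sn)^2 - ((l a)^2 + Tn)) := by
      nlinarith [mul_le_mul_of_nonneg_left ih2 h1a, mul_nonneg ha0 hE0]
    have g3 : (l a)^2 + Tn ≤ (l a + Sn)^2 := by
      nlinarith [mul_nonneg ha0 hSn0]
    have g5 : 1 - (1 - l a) * P - (l a * P + (1 - l a) * L)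
        - 1/2 * ((l a + Sn)^2 - ((l a)^2 + Tn)) ≤ 0 := by
      nlinarith [mul_le_mul_of_nonneg_left ih5 h1a,
        mul_le_mul_of_nonneg_left ih1 ha0, mul_nonneg ha0 hE0]
    have g4 : -(l a + Sn)^3 ≤ 1 - (1 - l a) * P - (l a * P + (1 - l a) * L)
        - 1/2 * ((l a + Sn)^2 - ((l a)^2 + Tn)) := by
      nlinarith [mul_le_mul_of_nonneg_left ih4 h1a,
        mul_le_mul_of_nonneg_left ih2 ha0,
        mul_le_mul_of_nonneg_left hE2 ha0,
        mul_nonneg (mul_nonneg ha0 hSn0) hSn0,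
        mul_nonneg (mul_nonneg ha0 ha0) hSn0,
        mul_nonneg (mul_nonneg ha0 ha0) ha0,
        mul_nonneg (mul_nonneg (mul_nonneg ha0 hSn0) hSn0) hSn0]
    exact ⟨g1, g2, g3, g4, g5⟩


/-- Quantitative second-order expansion: if `λⱼ ≥ 0` and `S = Σ λⱼ ≤ 1`, then
`1 − ∏'ⱼ (1 − λⱼ) − Σ_l λ_l ∏'_{j≠l} (1 − λⱼ)` equals `½(S² − Σ λⱼ²)` up to an error
of at most `S³`. -/
theorem two_or_more_second_order (l : ℕ → ℝ) (hpos : ∀ j, 0 ≤ l j)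
    (hsum : Summable l) (hS : ∑' j, l j ≤ 1) :
    |(1 - (∏' j, (1 - l j)) - ∑' i : ℕ, l i * ∏' j : {j : ℕ // j ≠ i}, (1 - l (j : ℕ)))
        - (1 / 2) * ((∑' j, l j) ^ 2 - ∑' j, (l j) ^ 2)|
      ≤ (∑' j, l j) ^ 3 := by
  set S := ∑' j, l j with hSdef
  have hS0 : 0 ≤ S := tsum_nonneg hpos
  have hle : ∀ j, l j ≤ S := fun j => Summable.le_tsum hsum j fun i _ => hpos i
  have h1 : ∀ j, l j ≤ 1 := fun j => (hle j).trans hS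
  have hf0 : ∀ j, (0:ℝ) ≤ 1 - l j := fun j => by linarith [h1 j]
  have hf1 : ∀ j, (1:ℝ) - l j ≤ 1 := fun j => by linarith [hpos j]
  -- the full infinite product
  have hQm : Multipliable (fun j => 1 - l j) := (my_hasProd hf0 hf1).multipliable
  set Q := ∏' j, (1 - l j) with hQdef
  have hQ : HasProd (fun j => 1 - l j) Q := hQm.hasProd
  -- the products with one index removed
  have hQim : ∀ i : ℕ, Multipliable (fun j : {j : ℕ // j ≠ i} => 1 - l (j : ℕ)) :=
    fun i => (my_hasProd (fun j => hf0 _) (fun j => hf1 _)).multipliable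
  set Qi : ℕ → ℝ := fun i => ∏' j : {j : ℕ // j ≠ i}, (1 - l (j : ℕ)) with hQidef
  have hQi : ∀ i, HasProd (fun j : {j : ℕ // j ≠ i} => 1 - l (j : ℕ)) (Qi i) :=
    fun i => (hQim i).hasProd
  -- bounds for Qi
  have hQi0 : ∀ i, 0 ≤ Qi i := fun i =>
    ge_of_tendsto (hQi i) (Eventually.of_forall fun t => my_prod_nonneg (fun j => hf0 _) t)
  -- key upper bound : Qi i ≤ partial product
  have hQiU : ∀ (s : Finset ℕ) (i : ℕ),
      Qi i ≤ ∏ j ∈ s.erase i, (1 - l j) := by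
    intro s i
    set t₀ : Finset {j : ℕ // j ≠ i} := (s.erase i).subtype (· ≠ i) with ht₀
    have hprod : ∏ x ∈ t₀, (1 - l (x : ℕ)) = ∏ j ∈ s.erase i, (1 - l j) := by
      rw [ht₀, Finset.prod_subtype_eq_prod_filter (fun j => 1 - l j) (p := (· ≠ i))]
      exact Finset.prod_congr (Finset.filter_true_of_mem
        fun x hx => Finset.ne_of_mem_erase hx) fun _ _ => rfl
    refine le_of_tendsto (hQi i) ?_
    filter_upwards [eventually_ge_atTop t₀] with t ht
    rw [← hprod]
    exact my_antitone (fun j => hf0 _) (fun j => hf1 _) ht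
  -- key lower bound
  have hQiL : ∀ (s : Finset ℕ) (i : ℕ), i ∈ s →
      (∏ j ∈ s.erase i, (1 - l j)) - (S - ∑ j ∈ s, l j) ≤ Qi i := by
    intro s i hi
    set t₀ : Finset {j : ℕ // j ≠ i} := (s.erase i).subtype (· ≠ i) with ht₀
    have hprod : ∏ x ∈ t₀, (1 - l (x : ℕ)) = ∏ j ∈ s.erase i, (1 - l j) := by
      rw [ht₀, Finset.prod_subtype_eq_prod_filter (fun j => 1 - l j) (p := (· ≠ i))]
      exact Finset.prod_congr (Finset.filter_true_of_mem
        fun x hx => Finset.ne_of_mem_erase hx) fun _ _ => rfl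
    refine ge_of_tendsto (hQi i) ?_
    filter_upwards [eventually_ge_atTop t₀] with t ht
    -- split the product
    have hsplit : (∏ x ∈ t \ t₀, (1 - l (x : ℕ))) * ∏ x ∈ t₀, (1 - l (x : ℕ))
        = ∏ x ∈ t, (1 - l (x : ℕ)) := Finset.prod_sdiff ht
    -- the removed indices have small total mass
    have hdisj : Disjoint ((t \ t₀).map (Function.Embedding.subtype _)) s := by
      rw [Finset.disjoint_left]
      intro j hj hjs
      obtain ⟨x, hx, rfl⟩ := Finset.mem_map.mp hj
      have hx0 : x ∉ t₀ := (Finset.mem_sdiff.mp hx).2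
      have : (x : ℕ) ∈ s.erase i := Finset.mem_erase.mpr ⟨x.2, hjs⟩
      exact hx0 (Finset.mem_subtype.mpr this)
    have hmass : ∑ x ∈ t \ t₀, l (x : ℕ) ≤ S - ∑ j ∈ s, l j := by
      have he : ∑ x ∈ t \ t₀, l (x : ℕ)
          = ∑ j ∈ (t \ t₀).map (Function.Embedding.subtype _), l j := by
        rw [Finset.sum_map]; rfl
      have hsum' : ∑ j ∈ (t \ t₀).map (Function.Embedding.subtype _) ∪ s, l j ≤ S :=
        Summable.sum_le_tsum _ (fun j _ => hpos j) hsum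
      rw [Finset.sum_union hdisj] at hsum'
      linarith [he]
    have hw : 1 - ∑ x ∈ t \ t₀, l (x : ℕ) ≤ ∏ x ∈ t \ t₀, (1 - l (x : ℕ)) :=
      my_weierstrass (fun x => hpos _) (fun x => h1 _) _
    have hp0 : 0 ≤ ∏ x ∈ t₀, (1 - l (x : ℕ)) := my_prod_nonneg (fun j => hf0 _) _
    have hp1 : ∏ x ∈ t₀, (1 - l (x : ℕ)) ≤ 1 :=
      my_prod_le_one (fun j => hf0 _) (fun j => hf1 _) _
    have hm0 : 0 ≤ ∑ x ∈ t \ t₀, l (x : ℕ) := Finset.sum_nonneg fun x _ => hpos _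
    calc (∏ j ∈ s.erase i, (1 - l j)) - (S - ∑ j ∈ s, l j)
        ≤ (∏ x ∈ t₀, (1 - l (x : ℕ))) - ∑ x ∈ t \ t₀, l (x : ℕ) := by
          rw [hprod]; linarith
      _ ≤ (1 - ∑ x ∈ t \ t₀, l (x : ℕ)) * ∏ x ∈ t₀, (1 - l (x : ℕ)) := by nlinarith
      _ ≤ (∏ x ∈ t \ t₀, (1 - l (x : ℕ))) * ∏ x ∈ t₀, (1 - l (x : ℕ)) :=
          mul_le_mul_of_nonneg_right hw hp0
      _ = ∏ x ∈ t, (1 - l (x : ℕ)) := hsplit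
  -- summability facts
  have hsum2 : Summable (fun j => (l j)^2) :=
    Summable.of_nonneg_of_le (fun j => sq_nonneg _) (fun j => by nlinarith [hpos j, h1 j]) hsum
  have hQi1 : ∀ i, Qi i ≤ 1 := fun i => by simpa using hQiU {i} i
  have hsumQ : Summable (fun i => l i * Qi i) :=
    Summable.of_nonneg_of_le (fun i => mul_nonneg (hpos i) (hQi0 i))
      (fun i => by nlinarith [hQi1 i, hpos i, hQi0 i]) hsum
  set T := ∑' j, (l j)^2 with hTdef
  set Lt := ∑' i, l i * Qi i with hLtdef
  have hSnet : Tendsto (fun s : Finset ℕ => ∑ j ∈ s, l j) atTop (𝓝 S) := hsum.hasSum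
  have hTnet : Tendsto (fun s : Finset ℕ => ∑ j ∈ s, (l j)^2) atTop (𝓝 T) := hsum2.hasSum
  have hMnet : Tendsto (fun s : Finset ℕ => ∑ i ∈ s, l i * Qi i) atTop (𝓝 Lt) := hsumQ.hasSum
  have hεnet : Tendsto (fun s : Finset ℕ => S - ∑ j ∈ s, l j) atTop (𝓝 0) := by
    simpa using (tendsto_const_nhds (x := S) (f := (atTop : Filter (Finset ℕ)))).sub hSnet
  have hε0 : ∀ s : Finset ℕ, 0 ≤ S - ∑ j ∈ s, l j := fun s => by
    linarith [Summable.sum_le_tsum s (fun j _ => hpos j) hsum]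
  have hLdiff : ∀ s : Finset ℕ,
      0 ≤ (∑ i ∈ s, l i * ∏ j ∈ s.erase i, (1 - l j)) - ∑ i ∈ s, l i * Qi i ∧
      (∑ i ∈ s, l i * ∏ j ∈ s.erase i, (1 - l j)) - ∑ i ∈ s, l i * Qi i
        ≤ S - ∑ j ∈ s, l j := by
    intro s
    rw [← Finset.sum_sub_distrib]
    constructor
    · exact Finset.sum_nonneg fun i hi => by
        have := hQiU s i; nlinarith [hpos i]
    · calc ∑ i ∈ s, (l i * ∏ j ∈ s.erase i, (1 - l j) - l i * Qi i)
          ≤ ∑ i ∈ s, l i * (S - ∑ j ∈ s, l j) := Finset.sum_le_sum fun i hi => by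
            have h := hQiL s i hi
            nlinarith [hpos i]
        _ = (∑ i ∈ s, l i) * (S - ∑ j ∈ s, l j) := by rw [← Finset.sum_mul]
        _ ≤ 1 * (S - ∑ j ∈ s, l j) := by
            have := Summable.sum_le_tsum s (fun j _ => hpos j) hsum
            exact mul_le_mul_of_nonneg_right (by linarith) (hε0 s)
        _ = S - ∑ j ∈ s, l j := one_mul _
  have hLnet : Tendsto (fun s : Finset ℕ => ∑ i ∈ s, l i * ∏ j ∈ s.erase i, (1 - l j))
      atTop (𝓝 Lt) := by
    have hz : Tendsto (fun s : Finset ℕ =>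
        (∑ i ∈ s, l i * ∏ j ∈ s.erase i, (1 - l j)) - ∑ i ∈ s, l i * Qi i) atTop (𝓝 0) :=
      squeeze_zero (fun s => (hLdiff s).1) (fun s => (hLdiff s).2) hεnet
    simpa using hMnet.add hz
  have hDnet : Tendsto (fun s : Finset ℕ =>
      (1 - ∏ j ∈ s, (1 - l j) - ∑ i ∈ s, l i * ∏ j ∈ s.erase i, (1 - l j))
        - (1/2 : ℝ) * ((∑ j ∈ s, l j)^2 - ∑ j ∈ s, (l j)^2)) atTop
      (𝓝 ((1 - Q - Lt) - (1/2) * (S^2 - T))) :=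
    ((tendsto_const_nhds.sub hQ).sub hLnet).sub
      (tendsto_const_nhds.mul ((hSnet.pow 2).sub hTnet))
  have hcube : Tendsto (fun s : Finset ℕ => -(∑ j ∈ s, l j)^3) atTop (𝓝 (-S^3)) :=
    (hSnet.pow 3).neg
  have key := fun s : Finset ℕ => fin_key l hpos h1 s
  have hup : (1 - Q - Lt) - (1/2) * (S^2 - T) ≤ 0 :=
    le_of_tendsto hDnet (Eventually.of_forall fun s => (key s).2.2.2.2)
  have hlo : -S^3 ≤ (1 - Q - Lt) - (1/2) * (S^2 - T) :=
    le_of_tendsto_of_tendsto' hcube hDnet fun s => (key s).2.2.2.1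
  have hS3 : 0 ≤ S^3 := pow_nonneg hS0 3
  rw [abs_le]
  exact ⟨by linarith, by linarith⟩
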